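/- Let (A, B, E, E') be a C*-operator-valued infinitesimal probability space, let x = x* ∈ A, and set X = [[x, 0], [0, x]] ∈ Ã. Then for all b, c ∈ B with (‖b‖ + ‖c‖)·‖x‖ < 1, the element I − X [[b, c], [0, b]] is invertible in Ã and ϱ_X([[b, c], [0, b]]) := Ẽ(X [[b, c], [0, b]] (I − X [[b, c], [0, b]])⁻¹) = [[ϱ_x(b), (Dϱ_x)(b)(c) + ∂ϱ_x(b)], [0, ϱ_x(b)]], where Dϱ_x is the Fréchet derivative of ϱ_x and ∂ϱ_x(b) = E'(xb(1 − xb)⁻¹). -/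

import Mathlib

open scoped BigOperators

variable {A B : Type*} [CStarAlgebra A] [CStarAlgebra B]

/-- `(A, B, E, E')` is a C*-operator-valued infinitesimal probability space, where the unital
C*-subalgebra `B ⊆ A` is realized via the isometric unital star-algebra embedding `ι : B → A`:
`E` is a bounded, completely positive, `B`-`B`-bimodule linear map with `E 1 = 1`, and `E'` is a
bounded, selfadjoint, `B`-`B`-bimodule linear map with `E' 1 = 0`. -/
structure IsCStarOVIProbSpace (ι : B →⋆ₐ[ℂ] A) (E E' : A →L[ℂ] B) : Prop where
  isometry : Isometry ι
  E_one : E 1 = 1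
  E_bimod : ∀ (b₁ b₂ : B) (a : A), E (ι b₁ * a * ι b₂) = b₁ * E a * b₂
  E_cp : ∀ (n : ℕ) (M : Matrix (Fin n) (Fin n) A),
      (∃ N : Matrix (Fin n) (Fin n) A, M = star N * N) →
      ∃ N' : Matrix (Fin n) (Fin n) B, M.map ⇑E = star N' * N'
  E'_one : E' 1 = 0
  E'_selfadj : ∀ a : A, E' (star a) = star (E' a)
  E'_bimod : ∀ (b₁ b₂ : B) (a : A), E' (ι b₁ * a * ι b₂) = b₁ * E' a * b₂

/-- `ϱ_z(b) = E(zb(1 − zb)⁻¹)`. -/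
noncomputable def varrhoT (ι : B →⋆ₐ[ℂ] A) (E : A →L[ℂ] B) (z : A) (b : B) : B :=
  E (z * ι b * Ring.inverse (1 - z * ι b))

/-- The ρ-transform `ρ_z(b) = ϱ_z(b)(1 + ϱ_z(b))⁻¹`. -/
noncomputable def rhoT (ι : B →⋆ₐ[ℂ] A) (E : A →L[ℂ] B) (z : A) (b : B) : B :=
  varrhoT ι E z b * Ring.inverse (1 + varrhoT ι E z b)

/-- `∂ϱ_z(b) = E'(zb(1 − zb)⁻¹)`. -/
noncomputable def dvarrhoT (ι : B →⋆ₐ[ℂ] A) (E' : A →L[ℂ] B) (z : A) (b : B) : B :=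
  E' (z * ι b * Ring.inverse (1 - z * ι b))

/-- The infinitesimal ρ-transform `∂ρ_z(b) = (1 + ϱ_z(b))⁻¹ ∂ϱ_z(b) (1 + ϱ_z(b))⁻¹`. -/
noncomputable def drhoT (ι : B →⋆ₐ[ℂ] A) (E E' : A →L[ℂ] B) (z : A) (b : B) : B :=
  Ring.inverse (1 + varrhoT ι E z b) * dvarrhoT ι E' z b * Ring.inverse (1 + varrhoT ι E z b)

open TrivSqZeroExt

/-- The map `Ẽ : Ã → B̃`, `[[a, a'], [0, a]] ↦ [[E a, E' a + E a'], [0, E a]]`, where the upper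
triangular algebra `Ã` (of matrices `[[a, a'], [0, a]]`) is realized as the trivial square-zero
extension `TrivSqZeroExt A A`. -/
noncomputable def tildeE (E E' : A →L[ℂ] B) (p : TrivSqZeroExt A A) : TrivSqZeroExt B B :=
  inl (E p.fst) + inr (E' p.fst + E p.snd)

/-- The embedding of `B̃` into `Ã` induced by `ι`. -/
noncomputable def tildeIota (ι : B →⋆ₐ[ℂ] A) (p : TrivSqZeroExt B B) : TrivSqZeroExt A A :=
  inl (ι p.fst) + inr (ι p.snd)

theorem aux_tsze {A : Type*} [CStarAlgebra A] (u v w : A)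
    (h1 : (1 - u) * w = 1) (h2 : w * (1 - u) = 1) :
    (1 - (inl u + inr v) : TrivSqZeroExt A A) * (inl w + inr (w * v * w)) = 1 ∧
    (inl w + inr (w * v * w)) * (1 - (inl u + inr v) : TrivSqZeroExt A A) = 1 := by
  constructor <;> ext <;>
    simp only [fst_mul, snd_mul, fst_sub, snd_sub, fst_one, snd_one, fst_add, snd_add,
      fst_inl, snd_inl, fst_inr, snd_inr, add_zero, zero_add, sub_zero, zero_sub,
      smul_eq_mul, op_smul_eq_mul]
  · exact h1
  · rw [mul_assoc w v w, ← mul_assoc (1 - u) w (v * w), h1, one_mul]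
    simp [neg_mul]
  · exact h2
  · rw [mul_assoc (w * v) w, h2, mul_one]
    simp [mul_neg]

/-- For a C*-operator-valued infinitesimal probability space `(A, B, E, E')`, a selfadjoint
`x ∈ A` and `X = [[x, 0], [0, x]]`, for all `b, c ∈ B` with `(‖b‖ + ‖c‖)·‖x‖ < 1` the element
`I − X [[b, c], [0, b]]` is invertible in `Ã` and
`ϱ_X([[b, c], [0, b]]) = [[ϱ_x(b), (Dϱ_x)(b)(c) + ∂ϱ_x(b)], [0, ϱ_x(b)]]`. -/
theorem varrho_upper_triangular
    (ι : B →⋆ₐ[ℂ] A) (E E' : A →L[ℂ] B) (h : IsCStarOVIProbSpace ι E E')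
    (x : A) (hx : star x = x) (b c : B) (hbc : (‖b‖ + ‖c‖) * ‖x‖ < 1) :
    IsUnit (1 - inl x * tildeIota ι (inl b + inr c)) ∧
    DifferentiableAt ℂ (varrhoT ι E x) b ∧
    tildeE E E' (inl x * tildeIota ι (inl b + inr c) *
        Ring.inverse (1 - inl x * tildeIota ι (inl b + inr c))) =
      inl (varrhoT ι E x b) + inr (fderiv ℂ (varrhoT ι E x) b c + dvarrhoT ι E' x b) := by
  have hc' : Isometry ι := h.isometry
  have hιnorm : ∀ y : B, ‖ι y‖ = ‖y‖ := fun y => hc'.norm_map_of_map_zero (map_zero ι) y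
  have hnu : ‖x * ι b‖ < 1 := by
    calc ‖x * ι b‖ ≤ ‖x‖ * ‖ι b‖ := norm_mul_le _ _
      _ = ‖x‖ * ‖b‖ := by rw [hιnorm]
      _ < 1 := by nlinarith [norm_nonneg x, norm_nonneg b, norm_nonneg c]
  have hU : IsUnit (1 - x * ι b) := ⟨Units.oneSub _ hnu, rfl⟩
  have hw1 : (1 - x * ι b) * Ring.inverse (1 - x * ι b) = 1 := Ring.mul_inverse_cancel _ hU
  have hw2 : Ring.inverse (1 - x * ι b) * (1 - x * ι b) = 1 := Ring.inverse_mul_cancel _ hU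
  obtain ⟨hq1, hq2⟩ :=
    aux_tsze (x * ι b) (x * ι c) (Ring.inverse (1 - x * ι b)) hw1 hw2
  have ht : inl x * tildeIota ι (inl b + inr c)
      = (inl (x * ι b) + inr (x * ι c) : TrivSqZeroExt A A) := by
    ext
    · simp [tildeIota]
    · simp [tildeIota, smul_eq_mul, op_smul_eq_mul]
  set W : A := Ring.inverse (1 - x * ι b) with hW
  let Q : (TrivSqZeroExt A A)ˣ :=
    ⟨1 - (inl (x * ι b) + inr (x * ι c)), inl W + inr (W * (x * ι c) * W), hq1, hq2⟩
  have hQu : IsUnit (1 - (inl (x * ι b) + inr (x * ι c)) : TrivSqZeroExt A A) := ⟨Q, rfl⟩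
  have hQinv : Ring.inverse (1 - (inl (x * ι b) + inr (x * ι c)) : TrivSqZeroExt A A)
      = inl W + inr (W * (x * ι c) * W) := Ring.inverse_unit Q
  -- derivative setup
  let ιL : B →L[ℂ] A := ⟨ι.toAlgHom.toLinearMap, hc'.continuous⟩
  let T : B →L[ℂ] A := (ContinuousLinearMap.mul ℂ A x).comp ιL
  have hT : HasFDerivAt (fun b' : B => x * ι b') T b := T.hasFDerivAt
  have hg : HasFDerivAt (fun b' : B => 1 - x * ι b') (-T) b := hT.const_sub 1
  have hinvD : HasFDerivAt Ring.inverse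
      (-ContinuousLinearMap.mulLeftRight ℂ A ↑hU.unit⁻¹ ↑hU.unit⁻¹) (1 - x * ι b) := by
    simpa [hU.unit_spec] using hasFDerivAt_ringInverse (𝕜 := ℂ) hU.unit
  have hFull : HasFDerivAt (varrhoT ι E x)
      (E.comp ((x * ι b) • ((-ContinuousLinearMap.mulLeftRight ℂ A ↑hU.unit⁻¹ ↑hU.unit⁻¹).comp
          (-T)) + (T.smulRight (Ring.inverse (1 - x * ι b))))) b :=
    E.hasFDerivAt.comp b (hT.mul' (by have := hinvD.comp b hg; exact this))
  refine ⟨ht ▸ hQu, hFull.differentiableAt, ?_⟩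
  rw [ht, hQinv]
  have hUinv : (↑hU.unit⁻¹ : A) = W := by
    rw [← Ring.inverse_unit hU.unit, hU.unit_spec]
  have hprod : (inl (x * ι b) + inr (x * ι c) : TrivSqZeroExt A A)
        * (inl W + inr (W * (x * ι c) * W))
      = inl ((x * ι b) * W)
        + inr ((x * ι b) * (W * (x * ι c) * W) + (x * ι c) * W) := by
    ext
    · simp
    · simp [snd_mul, smul_eq_mul, op_smul_eq_mul]
  rw [hprod]
  have hfd := hFull.fderiv
  rw [hfd]
  have hTc : T c = x * ι c := by
    simp [T, ιL, ContinuousLinearMap.mul_apply']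
    rfl
  simp only [ContinuousLinearMap.comp_apply, ContinuousLinearMap.add_apply,
    ContinuousLinearMap.smul_apply, ContinuousLinearMap.smulRight_apply,
    ContinuousLinearMap.neg_apply, ContinuousLinearMap.coe_smul', Pi.smul_apply,
    ContinuousLinearMap.mulLeftRight_apply, hTc, hUinv, smul_eq_mul]
  rw [tildeE]
  simp only [fst_add, fst_inl, fst_inr, snd_add, snd_inl, snd_inr, add_zero, zero_add]
  rw [varrhoT, dvarrhoT, ← hW]
  refine congrArg₂ (· + ·) rfl (congrArg inr ?_)
  have h6 : (x * ι b) * -(W * -(x * ι c) * W) = (x * ι b) * (W * (x * ι c) * W) := by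
    simp [mul_neg, neg_mul, neg_neg]
  rw [map_add]
  rw [show x * ι b * -(W * -(x * ι c) * W) = x * ι b * (W * (x * ι c) * W) from h6]
  rw [map_add]
  abel
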